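/- Fix λ > 0 and ν, c ∈ ℝ^n, and assume that for every z ∈ ℝ the lasso problem with design X, response ν + z·c, and penalty λ has a unique solution β̂(z). Then for every M ⊆ Fin p there exist m ≤ 2^{|M|} and order-connected sets I_1, …, I_m ⊆ ℝ such that {z ∈ ℝ : the active set of β̂(z) equals M} = I_1 ∪ ⋯ ∪ I_m; that is, conditional on the selected model being exactly M, the statistic z is truncated to a union of at most 2^{|M|} intervals, one for each possible sign vector of the active coefficients. -/

import Mathlib

open scoped BigOperators

/-- The lasso objective `f_{X,y,λ}(β) = (1/2)‖y − Xβ‖₂² + λ∑|β_j|`. -/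
noncomputable def lassoObj {n : ℕ} {κ : Type*} [Fintype κ]
    (X : Matrix (Fin n) κ ℝ) (y : Fin n → ℝ) (lam : ℝ) (β : κ → ℝ) : ℝ :=
  (1 / 2) * ∑ i, (y i - X.mulVec β i) ^ 2 + lam * ∑ j, |β j|

/-- A lasso solution is a global minimizer of the lasso objective. -/
def IsLassoSolution {n : ℕ} {κ : Type*} [Fintype κ]
    (X : Matrix (Fin n) κ ℝ) (y : Fin n → ℝ) (lam : ℝ) (βhat : κ → ℝ) : Prop :=
  ∀ β : κ → ℝ, lassoObj X y lam βhat ≤ lassoObj X y lam β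
noncomputable def lassoG {n : ℕ} {κ : Type*} [Fintype κ]
    (X : Matrix (Fin n) κ ℝ) (y : Fin n → ℝ) (β : κ → ℝ) (j : κ) : ℝ :=
  ∑ i, (y i - X.mulVec β i) * X i j

/-- limit helper -/
lemma le_zero_of_Ioo {a b δ : ℝ} (hδ : 0 < δ) (h : ∀ t ∈ Set.Ioo (0:ℝ) δ, a ≤ t * b) :
    a ≤ 0 := by
  have htend : Filter.Tendsto (fun t : ℝ => t * b) (nhdsWithin 0 (Set.Ioi 0)) (nhds 0) := by
    have h0 : Filter.Tendsto (fun t : ℝ => t * b) (nhds 0) (nhds 0) := by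
      have := (continuous_mul_right b).tendsto (0:ℝ)
      simpa using this
    exact h0.mono_left nhdsWithin_le_nhds
  exact ge_of_tendsto htend (Filter.eventually_of_mem (Ioo_mem_nhdsGT_of_mem ⟨le_refl 0, hδ⟩) h)

/-- cross term identity -/
lemma lasso_cross {n : ℕ} {κ : Type*} [Fintype κ]
    (X : Matrix (Fin n) κ ℝ) (y : Fin n → ℝ) (β d : κ → ℝ) :
    ∑ i, (y i - X.mulVec β i) * X.mulVec d i = ∑ j, lassoG X y β j * d j := by
  unfold lassoG
  simp only [Matrix.mulVec, dotProduct, Finset.mul_sum, Finset.sum_mul]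
  rw [Finset.sum_comm]
  congr 1; ext j; congr 1; ext i; ring

/-- KKT sufficiency -/
lemma isLassoSolution_of_kkt {n : ℕ} {κ : Type*} [Fintype κ]
    (X : Matrix (Fin n) κ ℝ) (y : Fin n → ℝ) (lam : ℝ) (β : κ → ℝ)
    (h : ∀ j, |lassoG X y β j| ≤ lam ∧ lassoG X y β j * β j = lam * |β j|) :
    IsLassoSolution X y lam β := by
  intro β'
  set d : κ → ℝ := β' - β with hd
  have hβ' : β' = β + d := by simp [hd]
  have hmv : ∀ i, X.mulVec β' i = X.mulVec β i + X.mulVec d i := by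
    intro i; rw [hβ', Matrix.mulVec_add]; simp
  have hsq : (1/2 : ℝ) * ∑ i, (y i - X.mulVec β' i) ^ 2
      = (1/2) * ∑ i, (y i - X.mulVec β i) ^ 2
        - ∑ i, (y i - X.mulVec β i) * X.mulVec d i
        + (1/2) * ∑ i, (X.mulVec d i) ^ 2 := by
    have hpt : ∀ i, (y i - X.mulVec β' i) ^ 2
        = (y i - X.mulVec β i) ^ 2 - 2 * ((y i - X.mulVec β i) * X.mulVec d i)
          + (X.mulVec d i) ^ 2 := by
      intro i; rw [hmv i]; ring
    rw [Finset.sum_congr rfl (fun i _ => hpt i)]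
    rw [Finset.sum_add_distrib, Finset.sum_sub_distrib, ← Finset.mul_sum]
    ring
  have key : lassoObj X y lam β' - lassoObj X y lam β
      = (1/2) * ∑ i, (X.mulVec d i) ^ 2
        + ∑ j, (lam * |β' j| - lassoG X y β j * β' j) := by
    unfold lassoObj
    rw [hsq, lasso_cross]
    have : ∑ j, (lam * |β' j| - lassoG X y β j * β' j)
        = ∑ j, (lam * |β' j| - lam * |β j| - lassoG X y β j * (β' j - β j)) := by
      apply Finset.sum_congr rfl; intro j _
      have := (h j).2; nlinarith [this]
    rw [this]
    simp only [Finset.sum_sub_distrib]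
    simp only [Finset.mul_sum, hd, Pi.sub_apply]
    ring
  have hnn : 0 ≤ lassoObj X y lam β' - lassoObj X y lam β := by
    rw [key]
    have h1 : 0 ≤ (1/2 : ℝ) * ∑ i, (X.mulVec d i) ^ 2 := by
      positivity
    have h2 : 0 ≤ ∑ j, (lam * |β' j| - lassoG X y β j * β' j) := by
      apply Finset.sum_nonneg; intro j _
      have hg := (h j).1
      have : lassoG X y β j * β' j ≤ |lassoG X y β j| * |β' j| := by
        calc lassoG X y β j * β' j ≤ |lassoG X y β j * β' j| := le_abs_self _
        _ = |lassoG X y β j| * |β' j| := abs_mul _ _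
      nlinarith [abs_nonneg (β' j), this, hg]
    linarith
  linarith

/-- one-dimensional perturbation inequality -/
lemma lasso_perturb {n : ℕ} {κ : Type*} [Fintype κ] [DecidableEq κ]
    (X : Matrix (Fin n) κ ℝ) (y : Fin n → ℝ) (lam : ℝ) (β : κ → ℝ)
    (hsol : IsLassoSolution X y lam β) (j : κ) (t : ℝ) :
    t * lassoG X y β j ≤ t ^ 2 / 2 * (∑ i, (X i j) ^ 2) + lam * (|β j + t| - |β j|) := by
  set β' : κ → ℝ := fun k => if k = j then β j + t else β k with hβ'
  have hmv : ∀ i, X.mulVec β' i = X.mulVec β i + t * X i j := by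
    intro i
    simp only [Matrix.mulVec, dotProduct, hβ']
    have : ∀ k, X i k * (if k = j then β j + t else β k)
        = X i k * β k + (if k = j then X i j * t else 0) := by
      intro k; by_cases hk : k = j <;> simp [hk] <;> ring
    rw [Finset.sum_congr rfl (fun k _ => this k), Finset.sum_add_distrib]
    simp [mul_comm]
  have habs : ∑ k, |β' k| = ∑ k, |β k| + (|β j + t| - |β j|) := by
    have : ∀ k, |β' k| = |β k| + (if k = j then |β j + t| - |β j| else 0) := by
      intro k; by_cases hk : k = j <;> simp [hβ', hk]
    rw [Finset.sum_congr rfl (fun k _ => this k), Finset.sum_add_distrib,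
      Finset.sum_ite_eq' Finset.univ j (fun k => |β j + t| - |β j|)]
    simp
  have hineq := hsol β'
  unfold lassoObj at hineq
  rw [habs] at hineq
  have hsq : ∑ i, (y i - X.mulVec β' i) ^ 2
      = ∑ i, (y i - X.mulVec β i) ^ 2 - 2 * t * lassoG X y β j + t ^ 2 * ∑ i, (X i j) ^ 2 := by
    have hpt : ∀ i, (y i - X.mulVec β' i) ^ 2
        = (y i - X.mulVec β i) ^ 2 - 2 * t * ((y i - X.mulVec β i) * X i j)
          + t ^ 2 * (X i j) ^ 2 := by
      intro i; rw [hmv i]; ring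
    rw [Finset.sum_congr rfl (fun i _ => hpt i), Finset.sum_add_distrib,
      Finset.sum_sub_distrib, ← Finset.mul_sum, ← Finset.mul_sum]
    rfl
  rw [hsq] at hineq
  nlinarith [hineq]

/-- KKT necessity -/
lemma kkt_of_isLassoSolution {n : ℕ} {κ : Type*} [Fintype κ] [DecidableEq κ]
    (X : Matrix (Fin n) κ ℝ) (y : Fin n → ℝ) (lam : ℝ) (hlam : 0 < lam) (β : κ → ℝ)
    (hsol : IsLassoSolution X y lam β) (j : κ) :
    |lassoG X y β j| ≤ lam ∧ lassoG X y β j * β j = lam * |β j| := by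
  set g := lassoG X y β j with hg
  set C := ∑ i, (X i j) ^ 2 with hC
  have hC0 : 0 ≤ C := Finset.sum_nonneg fun i _ => sq_nonneg _
  have base : ∀ t : ℝ, t * g ≤ t ^ 2 / 2 * C + lam * (|β j + t| - |β j|) :=
    fun t => lasso_perturb X y lam β hsol j t
  rcases lt_trichotomy (β j) 0 with hb | hb | hb
  · -- β j < 0 : show g = -lam
    have hbpos : 0 < -β j := by linarith
    have h1 : g + lam ≤ 0 := by
      apply le_zero_of_Ioo hbpos (b := C / 2)
      intro t ht
      have h := base t
      rw [abs_of_neg (by linarith [ht.2] : β j + t < 0), abs_of_neg hb] at h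
      have h3 : t * (g + lam) ≤ t * (C/2 * t) := by nlinarith
      have := (mul_le_mul_iff_right₀ ht.1).mp h3
      nlinarith [this]
    have h2 : -lam - g ≤ 0 := by
      apply le_zero_of_Ioo hbpos (b := C / 2)
      intro t ht
      have h := base (-t)
      rw [abs_of_neg (by linarith [ht.1] : β j + -t < 0), abs_of_neg hb] at h
      have h3 : t * (-lam - g) ≤ t * (C/2 * t) := by nlinarith
      have := (mul_le_mul_iff_right₀ ht.1).mp h3
      nlinarith [this]
    have hge : g = -lam := by linarith
    constructor
    · rw [hge, abs_neg, abs_of_pos hlam]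
    · rw [hge, abs_of_neg hb]; ring
  · -- β j = 0
    constructor
    · rw [abs_le]
      constructor
      · have : -g - lam ≤ 0 := by
          apply le_zero_of_Ioo (one_pos) (b := C / 2)
          intro t ht
          have h1 := base (-t)
          rw [hb] at h1
          simp only [zero_add, abs_neg, abs_zero, sub_zero] at h1
          rw [abs_of_pos ht.1] at h1
          have h2 : (-t) * g ≤ t^2/2 * C + lam * t := by nlinarith [h1]
          have h3 : t * (-g - lam) ≤ t * (C/2 * t) := by nlinarith
          have := (mul_le_mul_iff_right₀ ht.1).mp h3
          nlinarith [this]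
        linarith
      · have : g - lam ≤ 0 := by
          apply le_zero_of_Ioo (one_pos) (b := C / 2)
          intro t ht
          have h1 := base t
          rw [hb] at h1
          simp only [zero_add, abs_zero, sub_zero] at h1
          rw [abs_of_pos ht.1] at h1
          have h3 : t * (g - lam) ≤ t * (C/2 * t) := by nlinarith
          have := (mul_le_mul_iff_right₀ ht.1).mp h3
          nlinarith [this]
        linarith
    · simp [hb]
  · -- β j > 0 : show g = lam
    have h1 : g - lam ≤ 0 := by
      apply le_zero_of_Ioo hb (b := C / 2)
      intro t ht
      have h := base t
      rw [abs_of_pos (by linarith [ht.1] : (0:ℝ) < β j + t), abs_of_pos hb] at h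
      have h3 : t * (g - lam) ≤ t * (C/2 * t) := by nlinarith
      have := (mul_le_mul_iff_right₀ ht.1).mp h3
      nlinarith [this]
    have h2 : lam - g ≤ 0 := by
      apply le_zero_of_Ioo hb (b := C / 2)
      intro t ht
      have h := base (-t)
      rw [show β j + -t = β j - t by ring, abs_of_pos (by linarith [ht.2] : (0:ℝ) < β j - t),
        abs_of_pos hb] at h
      have h3 : t * (lam - g) ≤ t * (C/2 * t) := by nlinarith
      have := (mul_le_mul_iff_right₀ ht.1).mp h3
      nlinarith [this]
    have hge : g = lam := by linarith
    constructor
    · rw [hge, abs_of_pos hlam]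
    · rw [hge, abs_of_pos hb]

/-- Conditioning on the selected model being exactly `M` restricts the line statistic
`z` to a union of at most `2^{|M|}` intervals (one per sign vector of the active
coefficients). -/
theorem lasso_model_event_union_of_intervals {n p : ℕ}
    (X : Matrix (Fin n) (Fin p) ℝ) (lam : ℝ) (hlam : 0 < lam)
    (ν c : Fin n → ℝ)
    (βhat : ℝ → Fin p → ℝ)
    (hβhat : ∀ z : ℝ, IsLassoSolution X (ν + z • c) lam (βhat z) ∧
      ∀ β : Fin p → ℝ, IsLassoSolution X (ν + z • c) lam β → β = βhat z)
    (M : Finset (Fin p)) :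
    ∃ m ≤ 2 ^ M.card, ∃ I : Fin m → Set ℝ,
      (∀ i, (I i).OrdConnected) ∧
      {z : ℝ | {j | βhat z j ≠ 0} = (M : Set (Fin p))} = ⋃ i, I i := by
  classical
  -- sign-indexed pieces
  set E : (M → Bool) → Set ℝ := fun s =>
    {z | {j | βhat z j ≠ 0} = (M : Set (Fin p)) ∧
      ∀ j : M, (0 < βhat z (j : Fin p) ↔ s j = true)} with hE
  have hcard : Fintype.card (M → Bool) = 2 ^ M.card := by
    simp [Fintype.card_fun]
  refine ⟨2 ^ M.card, le_refl _, fun i => E ((Fintype.equivFinOfCardEq hcard).symm i), ?_, ?_⟩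
  · -- each piece is ord-connected
    intro i
    set s := (Fintype.equivFinOfCardEq hcard).symm i with hs
    constructor
    intro z1 hz1 z2 hz2 z hz
    obtain ⟨hz1a, hz1b⟩ : z1 ∈ E s := hz1
    obtain ⟨hz2a, hz2b⟩ : z2 ∈ E s := hz2
    rcases eq_or_lt_of_le hz.1 with h1 | h1
    · rw [← h1]; exact ⟨hz1a, hz1b⟩
    rcases eq_or_lt_of_le hz.2 with h2 | h2
    · rw [h2]; exact ⟨hz2a, hz2b⟩
    -- z1 < z < z2 : strict convex combination
    set t : ℝ := (z2 - z) / (z2 - z1) with ht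
    have hz12 : z1 < z2 := lt_trans h1 h2
    have hden : 0 < z2 - z1 := by linarith
    have ht0 : 0 < t := div_pos (by linarith) hden
    have ht1 : t < 1 := by
      rw [ht, div_lt_one hden]; linarith
    have hzc : z = t * z1 + (1 - t) * z2 := by
      have h' : t * (z2 - z1) = z2 - z := by rw [ht]; exact div_mul_cancel₀ _ (ne_of_gt hden)
      linear_combination h'
    set β1 := βhat z1 with hβ1
    set β2 := βhat z2 with hβ2
    set βs : Fin p → ℝ := fun j => t * β1 j + (1 - t) * β2 j with hβs
    -- residual decomposition
    have hy : ∀ i, (ν + z • c) i = t * (ν + z1 • c) i + (1 - t) * (ν + z2 • c) i := by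
      intro i; simp only [Pi.add_apply, Pi.smul_apply, smul_eq_mul]
      rw [hzc]; ring
    have hmv : ∀ i, X.mulVec βs i = t * X.mulVec β1 i + (1 - t) * X.mulVec β2 i := by
      intro i
      simp only [Matrix.mulVec, dotProduct, hβs, Finset.mul_sum]
      rw [← Finset.sum_add_distrib]
      apply Finset.sum_congr rfl; intro k _; ring
    have hG : ∀ j, lassoG X (ν + z • c) βs j
        = t * lassoG X (ν + z1 • c) β1 j + (1 - t) * lassoG X (ν + z2 • c) β2 j := by
      intro j
      unfold lassoG
      simp only [Finset.mul_sum]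
      rw [← Finset.sum_add_distrib]
      apply Finset.sum_congr rfl; intro i _
      rw [hy i, hmv i]; ring
    have hk1 := fun j => kkt_of_isLassoSolution X (ν + z1 • c) lam hlam β1 (hβhat z1).1 j
    have hk2 := fun j => kkt_of_isLassoSolution X (ν + z2 • c) lam hlam β2 (hβhat z2).1 j
    -- facts about β1 β2 from membership
    have hmem1 : ∀ j : Fin p, β1 j ≠ 0 ↔ j ∈ M := by
      intro j
      constructor
      · intro h; have hmm : j ∈ {j | βhat z1 j ≠ 0} := h; rw [hz1a] at hmm; exact hmm
      · intro h; have hmm : j ∈ (M : Set (Fin p)) := h; rw [← hz1a] at hmm; exact hmm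
    have hmem2 : ∀ j : Fin p, β2 j ≠ 0 ↔ j ∈ M := by
      intro j
      constructor
      · intro h; have hmm : j ∈ {j | βhat z2 j ≠ 0} := h; rw [hz2a] at hmm; exact hmm
      · intro h; have hmm : j ∈ (M : Set (Fin p)) := h; rw [← hz2a] at hmm; exact hmm
    -- sign structure on M
    have hsign : ∀ j : Fin p, ∀ hj : j ∈ M,
        (s ⟨j, hj⟩ = true → 0 < β1 j ∧ 0 < β2 j) ∧
        (s ⟨j, hj⟩ = false → β1 j < 0 ∧ β2 j < 0) := by
      intro j hj
      constructor
      · intro hst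
        exact ⟨(hz1b ⟨j, hj⟩).mpr hst, (hz2b ⟨j, hj⟩).mpr hst⟩
      · intro hsf
        have h1' : ¬ (0 < β1 j) := fun h => by
          have := (hz1b ⟨j, hj⟩).mp h; rw [hsf] at this; exact Bool.false_ne_true this
        have h2' : ¬ (0 < β2 j) := fun h => by
          have := (hz2b ⟨j, hj⟩).mp h; rw [hsf] at this; exact Bool.false_ne_true this
        have hne1 : β1 j ≠ 0 := (hmem1 j).mpr hj
        have hne2 : β2 j ≠ 0 := (hmem2 j).mpr hj
        exact ⟨lt_of_le_of_ne (not_lt.mp h1') hne1, lt_of_le_of_ne (not_lt.mp h2') hne2⟩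
    -- βs: sign and support facts
    have hβs_off : ∀ j : Fin p, j ∉ M → βs j = 0 := by
      intro j hj
      have h1' : β1 j = 0 := by
        by_contra h; exact hj ((hmem1 j).mp h)
      have h2' : β2 j = 0 := by
        by_contra h; exact hj ((hmem2 j).mp h)
      simp [hβs, h1', h2']
    have hβs_pos : ∀ j : Fin p, ∀ hj : j ∈ M, s ⟨j, hj⟩ = true → 0 < βs j := by
      intro j hj hst
      obtain ⟨ha, hb⟩ := (hsign j hj).1 hst
      have := mul_pos ht0 ha
      have := mul_pos (by linarith : (0:ℝ) < 1 - t) hb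
      simp only [hβs]; nlinarith
    have hβs_neg : ∀ j : Fin p, ∀ hj : j ∈ M, s ⟨j, hj⟩ = false → βs j < 0 := by
      intro j hj hsf
      obtain ⟨ha, hb⟩ := (hsign j hj).2 hsf
      have := mul_pos ht0 (by linarith : (0:ℝ) < -β1 j)
      have := mul_pos (by linarith : (0:ℝ) < 1 - t) (by linarith : (0:ℝ) < -β2 j)
      simp only [hβs]; nlinarith
    -- KKT for βs at z
    have hkkt : ∀ j, |lassoG X (ν + z • c) βs j| ≤ lam ∧
        lassoG X (ν + z • c) βs j * βs j = lam * |βs j| := by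
      intro j
      rw [hG j]
      have hg1 := (hk1 j).1
      have hg2 := (hk2 j).1
      have habs : |t * lassoG X (ν + z1 • c) β1 j + (1 - t) * lassoG X (ν + z2 • c) β2 j| ≤ lam := by
        calc |t * lassoG X (ν + z1 • c) β1 j + (1 - t) * lassoG X (ν + z2 • c) β2 j|
            ≤ |t * lassoG X (ν + z1 • c) β1 j| + |(1 - t) * lassoG X (ν + z2 • c) β2 j| :=
              abs_add_le _ _
          _ = t * |lassoG X (ν + z1 • c) β1 j| + (1 - t) * |lassoG X (ν + z2 • c) β2 j| := by
              rw [abs_mul, abs_mul, abs_of_pos ht0, abs_of_pos (by linarith : (0:ℝ) < 1 - t)]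
          _ ≤ t * lam + (1 - t) * lam := by
              apply add_le_add
              · exact mul_le_mul_of_nonneg_left hg1 (le_of_lt ht0)
              · exact mul_le_mul_of_nonneg_left hg2 (by linarith)
          _ = lam := by ring
      refine ⟨habs, ?_⟩
      by_cases hj : j ∈ M
      · rcases Bool.eq_false_or_eq_true (s ⟨j, hj⟩) with hst | hsf
        · -- positive sign
          obtain ⟨ha, hb⟩ := (hsign j hj).1 hst
          have hg1' : lassoG X (ν + z1 • c) β1 j = lam := by
            have := (hk1 j).2
            rw [abs_of_pos ha] at this
            have hne : β1 j ≠ 0 := ne_of_gt ha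
            rcases mul_eq_mul_right_iff.mp this with h | h
            · exact h
            · exact absurd h hne
          have hg2' : lassoG X (ν + z2 • c) β2 j = lam := by
            have := (hk2 j).2
            rw [abs_of_pos hb] at this
            have hne : β2 j ≠ 0 := ne_of_gt hb
            rcases mul_eq_mul_right_iff.mp this with h | h
            · exact h
            · exact absurd h hne
          rw [hg1', hg2', abs_of_pos (hβs_pos j hj hst)]
          ring
        · -- negative sign
          obtain ⟨ha, hb⟩ := (hsign j hj).2 hsf
          have hg1' : lassoG X (ν + z1 • c) β1 j = -lam := by
            have := (hk1 j).2
            rw [abs_of_neg ha] at this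
            have hne : β1 j ≠ 0 := ne_of_lt ha
            rcases mul_eq_mul_right_iff.mp (by linarith [this] :
              lassoG X (ν + z1 • c) β1 j * β1 j = (-lam) * β1 j) with h | h
            · exact h
            · exact absurd h hne
          have hg2' : lassoG X (ν + z2 • c) β2 j = -lam := by
            have := (hk2 j).2
            rw [abs_of_neg hb] at this
            have hne : β2 j ≠ 0 := ne_of_lt hb
            rcases mul_eq_mul_right_iff.mp (by linarith [this] :
              lassoG X (ν + z2 • c) β2 j * β2 j = (-lam) * β2 j) with h | h
            · exact h
            · exact absurd h hne
          rw [hg1', hg2', abs_of_neg (hβs_neg j hj hsf)]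
          ring
      · rw [hβs_off j hj]; simp
    have hsolz : IsLassoSolution X (ν + z • c) lam βs :=
      isLassoSolution_of_kkt X (ν + z • c) lam βs hkkt
    have hβseq : βs = βhat z := (hβhat z).2 βs hsolz
    -- conclude membership
    show z ∈ E s
    refine ⟨?_, ?_⟩
    · ext j
      simp only [Set.mem_setOf_eq, Finset.coe_sort_coe, Finset.mem_coe]
      rw [← hβseq]
      constructor
      · intro h
        by_contra hj
        exact h (hβs_off j hj)
      · intro hj
        rcases Bool.eq_false_or_eq_true (s ⟨j, hj⟩) with hst | hsf
        · exact ne_of_gt (hβs_pos j hj hst)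
        · exact ne_of_lt (hβs_neg j hj hsf)
    · intro j
      rw [← hβseq]
      rcases Bool.eq_false_or_eq_true (s j) with hst | hsf
      · rw [hst]
        simp only [iff_true]
        exact hβs_pos j j.2 (by simpa using hst)
      · rw [hsf]
        simp only [Bool.false_eq_true, iff_false, not_lt]
        exact le_of_lt (hβs_neg j j.2 (by simpa using hsf))
  · -- the union is the whole event
    rw [((Fintype.equivFinOfCardEq hcard).symm.surjective).iUnion_comp (g := E)]
    ext z
    simp only [Set.mem_setOf_eq, Set.mem_iUnion]
    constructor
    · intro hz
      refine ⟨fun j => decide (0 < βhat z (j : Fin p)), hz, fun j => ?_⟩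
      simp
    · rintro ⟨s, hz, -⟩
      exact hz
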